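/- Let ξ ∈ 𝒜^ℕ be a rich infinite word over a finite alphabet 𝒜, and let u be a factor of ξ. Then u is a palindrome if and only if u is a privileged word. -/

import Mathlib

open scoped ENNReal Classical

noncomputable section

namespace Arx1111

variable {A : Type*}

/-! ### Words and infinite words -/

/-- The left shift on right-infinite words. -/
def shift (ξ : ℕ → A) : ℕ → A := fun n => ξ (n + 1)

/-- The finite word `u` occurs in the infinite word `ξ` at position `k`. -/
def FactorAt (u : List A) (ξ : ℕ → A) (k : ℕ) : Prop :=
  u = (List.range u.length).map fun i => ξ (k + i)

/-- `u` is a factor of the infinite word `ξ`. -/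
def IsFactorOf (u : List A) (ξ : ℕ → A) : Prop := ∃ k, FactorAt u ξ k

/-- `u` is a prefix of the infinite word `ξ`. -/
def PrefixOfInf (u : List A) (ξ : ℕ → A) : Prop := FactorAt u ξ 0

/-- `u` is a proper prefix of `v`. -/
def PPrefix (u v : List A) : Prop := u <+: v ∧ u ≠ v

/-- The `n`-th power `u^n` of a finite word `u`. -/
def wordPow (u : List A) : ℕ → List A
  | 0 => []
  | n + 1 => u ++ wordPow u n

/-- The language of a set of infinite words: all finite factors of its elements. -/
def language (Ξ : Set (ℕ → A)) : Set (List A) := {u | ∃ ξ ∈ Ξ, IsFactorOf u ξ}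

/-! ### Subshifts -/

/-- `Ξ` is a (right-infinite) subshift: nonempty, closed, shift-invariant. -/
structure IsSubshift [TopologicalSpace A] (Ξ : Set (ℕ → A)) : Prop where
  nonempty : Ξ.Nonempty
  isClosed : IsClosed Ξ
  shift_mem : ∀ ξ ∈ Ξ, shift ξ ∈ Ξ

/-- Minimality: every orbit is dense in `Ξ`. -/
def IsMinimal [TopologicalSpace A] (Ξ : Set (ℕ → A)) : Prop :=
  ∀ ξ ∈ Ξ, Ξ ⊆ closure (Set.range fun n => shift^[n] ξ)

/-- Aperiodicity. -/
def Aperiodic (Ξ : Set (ℕ → A)) : Prop :=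
  ∀ ξ ∈ Ξ, ∀ n : ℕ, shift^[n] ξ = ξ → n = 0

/-! ### Occurrences, complete first returns, privileged words -/

variable [DecidableEq A]

/-- The number of occurrences of `u` as a factor of `w`. -/
def occCount (u w : List A) : ℕ :=
  ((List.range (w.length + 1)).filter fun k => (w.drop k).take u.length == u).length

/-- `u'` is a complete first return to `u`: if `u` is empty, `u'` is a single letter;
otherwise `u` is a prefix and a suffix of `u'` and occurs exactly twice in `u'`. -/
def IsCFR (u u' : List A) : Prop :=
  if u = [] then u'.length = 1
  else u <+: u' ∧ u <:+ u' ∧ occCount u u' = 2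

/-- Privileged words of order `n`. -/
inductive PrivOrder : ℕ → List A → Prop where
  | zero : PrivOrder 0 []
  | succ {n : ℕ} {u u' : List A} : PrivOrder n u → IsCFR u u' → PrivOrder (n + 1) u'

/-- A word is privileged if it is privileged of some order. -/
def IsPrivileged (u : List A) : Prop := ∃ n, PrivOrder n u

/-- `u'` is a complete first return to `u` inside the language `L`. -/
def CFRin (L : Set (List A)) (u u' : List A) : Prop := u' ∈ L ∧ IsCFR u u'

/-- `u` is right-special for the language `L`. -/
def RightSpecial (L : Set (List A)) (u : List A) : Prop :=
  u ∈ L ∧ ∃ a b : A, a ≠ b ∧ u ++ [a] ∈ L ∧ u ++ [b] ∈ L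

/-- `a(v)`: number of one-letter right extensions of `v` in `L`, minus one. -/
def aext (L : Set (List A)) (v : List A) : ℕ := Nat.card {a : A // v ++ [a] ∈ L} - 1

/-- `ã(v)`: number of complete first returns to `v` in `L`, minus one, if `v` is
privileged, and `0` otherwise. -/
def atil (L : Set (List A)) (v : List A) : ℕ :=
  if IsPrivileged v then Nat.card {u' : List A // CFRin L v u'} - 1 else 0

/-- `S(u)`: right-special words `r` with `u ⪯ r ≺ u'` for some complete first return `u'`. -/
def Sset (L : Set (List A)) (u : List A) : Set (List A) :=
  {r | RightSpecial L r ∧ ∃ u', CFRin L u u' ∧ u <+: r ∧ PPrefix r u'}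

/-- Right-special balanced: between a privileged word and any of its complete first
returns there is exactly one right-special word. -/
def RSBalanced (L : Set (List A)) : Prop :=
  ∀ u, IsPrivileged u → u ∈ L → ∀ u', CFRin L u u' →
    ∃! r, RightSpecial L r ∧ u <+: r ∧ PPrefix r u'

/-- `r'` is the shortest right-special word having `r` as a proper prefix. -/
def IsShortestRSExt (L : Set (List A)) (r r' : List A) : Prop :=
  RightSpecial L r' ∧ PPrefix r r' ∧
    ∀ r'', RightSpecial L r'' → PPrefix r r'' → r'.length ≤ r''.length

/-- `r = φ⁽⁰⁾(u)`: `r` is the shortest right-special word having `u` as a prefix. -/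
def IsPhi0 (L : Set (List A)) (u r : List A) : Prop :=
  RightSpecial L r ∧ u <+: r ∧ ∀ r', RightSpecial L r' → u <+: r' → r.length ≤ r'.length

/-- `H⁽¹⁾`: pairs of distinct one-letter right extensions of a common word. -/
def H1 (L : Set (List A)) (v₁ v₂ : List A) : Prop :=
  v₁ ∈ L ∧ v₂ ∈ L ∧ v₁ ≠ v₂ ∧ ∃ (w : List A) (a b : A), v₁ = w ++ [a] ∧ v₂ = w ++ [b]

/-- `H̃⁽¹⁾`: pairs of distinct complete first returns to a common privileged word. -/
def TildeH1 (L : Set (List A)) (u₁ u₂ : List A) : Prop :=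
  u₁ ≠ u₂ ∧ ∃ u, IsPrivileged u ∧ CFRin L u u₁ ∧ CFRin L u u₂

/-- Length of the longest common prefix of two finite words. -/
def lcpLenW (u v : List A) : ℕ := sSup {n | n ≤ u.length ∧ u.take n = v.take n}

/-- Length of the longest common privileged prefix of two finite words. -/
def weeLenW (u v : List A) : ℕ :=
  sSup {n | ∃ w : List A, IsPrivileged w ∧ w.length = n ∧ w <+: u ∧ w <+: v}

/-- `φ⁽¹⁾`: the pair of one-letter extensions of `u₁ ∧ u₂` which are prefixes of
`u₁` resp. `u₂`. -/
def phi1 (u₁ u₂ : List A) : List A × List A :=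
  (u₁.take (lcpLenW u₁ u₂ + 1), u₂.take (lcpLenW u₁ u₂ + 1))

/-! ### Bounded powers and repulsiveness -/

/-- Bounded powers: there is `p` such that no `(p+1)`-th power of a nonempty word
belongs to `L`. -/
def BoundedPowers (L : Set (List A)) : Prop :=
  ∃ p : ℕ, ∀ u ∈ L, u ≠ [] → wordPow u (p + 1) ∉ L

/-- The set of ratios `(|W|-|w|)/|w|` over words `w, W ∈ L` with `w` a nonempty proper
prefix and a suffix of `W`. -/
def repulsionSet (L : Set (List A)) : Set ℝ :=
  {x | ∃ w W : List A, w ∈ L ∧ W ∈ L ∧ w ≠ [] ∧ PPrefix w W ∧ w <:+ W ∧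
        x = ((W.length : ℝ) - (w.length : ℝ)) / (w.length : ℝ)}

/-- The index of repulsiveness `ℓ`. -/
def repulsionIndex (L : Set (List A)) : ℝ := sInf (repulsionSet L)

/-- Repulsive: `ℓ > 0`. -/
def Repulsive (L : Set (List A)) : Prop := 0 < repulsionIndex L

/-! ### Privileged prefixes of infinite words -/

/-- The `n`-th privileged prefix `ξ̃ₙ` of an infinite word `ξ`. -/
def privPrefix (ξ : ℕ → A) : ℕ → List A
  | 0 => []
  | n + 1 =>
    if h : ∃ u', IsCFR (privPrefix ξ n) u' ∧ PrefixOfInf u' ξ then h.choose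
    else privPrefix ξ n

/-- The order `ind(ξ ⩏ η)` of the longest common privileged prefix of two infinite
words; the word `ξ ⩏ η` itself is `privPrefix ξ (weeInd ξ η)`. -/
def weeInd (ξ η : ℕ → A) : ℕ := sSup {n | privPrefix ξ n = privPrefix η n}

/-- Length of the longest common prefix `ξ ∧ η` of two distinct infinite words. -/
def lcpLenInf (ξ η : ℕ → A) : ℕ := sInf {n | ξ n ≠ η n}

/-! ### Choice functions, weight functions and the metrics -/

/-- A choice function for `Ξ`. -/
def IsChoiceFun (Ξ : Set (ℕ → A)) (τ : List A → ℕ → A) : Prop :=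
  (∀ v ∈ language Ξ, τ v ∈ Ξ ∧ PrefixOfInf v (τ v)) ∧
  (∀ v ∈ language Ξ, ∀ w ∈ language Ξ, v.length < w.length →
    PrefixOfInf w (τ v) → τ w = τ v)

/-- A weight function. -/
structure IsWeight (δ : ℕ → ℝ) : Prop where
  pos : ∀ n, 0 < δ n
  strictAnti : StrictAnti δ
  tendsto_zero : Filter.Tendsto δ Filter.atTop (nhds 0)
  submul : ∃ c : ℝ, 0 < c ∧ ∀ a b : ℕ, δ (a * b) ≤ c * δ a * δ b
  doubling : ∃ c : ℝ, 0 < c ∧ ∀ a : ℕ, c * δ a ≤ δ (2 * a)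

variable [TopologicalSpace A]

/-- The metric `d_τ` associated to the right-special horizontal edges. -/
def dTau (Ξ : Set (ℕ → A)) (δ : ℕ → ℝ) (τ : List A → ℕ → A) (ξ η : ℕ → A) : ℝ≥0∞ :=
  ⨆ f : {f : (ℕ → A) → ℝ // ContinuousOn f Ξ ∧
      ∀ v₁ v₂, H1 (language Ξ) v₁ v₂ → |f (τ v₁) - f (τ v₂)| ≤ δ (lcpLenW v₁ v₂)},
    ENNReal.ofReal |f.1 ξ - f.1 η|

/-- The metric `d̃_τ` associated to the privileged horizontal edges. -/
def dTilTau (Ξ : Set (ℕ → A)) (δ : ℕ → ℝ) (τ : List A → ℕ → A) (ξ η : ℕ → A) : ℝ≥0∞ :=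
  ⨆ f : {f : (ℕ → A) → ℝ // ContinuousOn f Ξ ∧
      ∀ u₁ u₂, TildeH1 (language Ξ) u₁ u₂ → |f (τ u₁) - f (τ u₂)| ≤ δ (weeLenW u₁ u₂)},
    ENNReal.ofReal |f.1 ξ - f.1 η|

/-- `d_inf`. -/
def dInf (Ξ : Set (ℕ → A)) (δ : ℕ → ℝ) (ξ η : ℕ → A) : ℝ≥0∞ :=
  ⨅ τ : {τ // IsChoiceFun Ξ τ}, dTau Ξ δ τ.1 ξ η

/-- `d_sup`. -/
def dSup (Ξ : Set (ℕ → A)) (δ : ℕ → ℝ) (ξ η : ℕ → A) : ℝ≥0∞ :=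
  ⨆ τ : {τ // IsChoiceFun Ξ τ}, dTau Ξ δ τ.1 ξ η

/-- `d̃_inf`. -/
def dTilInf (Ξ : Set (ℕ → A)) (δ : ℕ → ℝ) (ξ η : ℕ → A) : ℝ≥0∞ :=
  ⨅ τ : {τ // IsChoiceFun Ξ τ}, dTilTau Ξ δ τ.1 ξ η

/-- `d̃_sup`. -/
def dTilSup (Ξ : Set (ℕ → A)) (δ : ℕ → ℝ) (ξ η : ℕ → A) : ℝ≥0∞ :=
  ⨆ τ : {τ // IsChoiceFun Ξ τ}, dTilTau Ξ δ τ.1 ξ η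

/-- `β̃_τ(ξ̃ₙ)`: equals `1` if the longest common privileged prefix of `τ(ξ̃ₙ)` and `ξ`
is `ξ̃ₙ`, and `0` otherwise. -/
def btil (τ : List A → ℕ → A) (ξ : ℕ → A) (n : ℕ) : ℝ≥0∞ :=
  if privPrefix (τ (privPrefix ξ n)) (weeInd (τ (privPrefix ξ n)) ξ) = privPrefix ξ n
  then 1 else 0

/-! ### Zeta functions -/

/-- `ζ_k(s)` (with the convention `0⁰ = 0`). -/
def zeta (L : Set (List A)) (δ : ℕ → ℝ) (k : ℕ) (s : ℝ) : ℝ≥0∞ :=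
  ∑' v : L, (if aext L (v : List A) = 0 then 0 else ((aext L (v : List A) : ℝ≥0∞)) ^ k) *
    ENNReal.ofReal (δ (v : List A).length ^ s)

/-- `ζ̃_k(s)` (with the convention `0⁰ = 0`). -/
def zetaTil (L : Set (List A)) (δ : ℕ → ℝ) (k : ℕ) (s : ℝ) : ℝ≥0∞ :=
  ∑' v : L, (if atil L (v : List A) = 0 then 0 else ((atil L (v : List A) : ℝ≥0∞)) ^ k) *
    ENNReal.ofReal (δ (v : List A).length ^ s)

/-- Almost finite privileged rank. -/
def AlmostFiniteRank (L : Set (List A)) : Prop :=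
  ∃ a b : ℝ, 0 < a ∧ 0 < b ∧ ∀ u, IsPrivileged u → u ∈ L → 2 ≤ u.length →
    (Nat.card {u' : List A // CFRin L u u'} : ℝ) ≤ a * (Real.log u.length) ^ b


/-- An infinite word is rich if every factor `u` contains exactly `|u| + 1` distinct
palindromic factors (counting the empty word). -/
def IsRich {A : Type*} (ξ : ℕ → A) : Prop :=
  ∀ u : List A, IsFactorOf u ξ →
    Nat.card {v : List A // v <:+: u ∧ v.reverse = v} = u.length + 1

section Statement2Aux
set_option linter.unusedSectionVars false
omit [TopologicalSpace A]


lemma pal_of_len_le_one (l : List A) (h : l.length ≤ 1) : l.reverse = l := by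
  match l, h with
  | [], _ => rfl
  | [a], _ => rfl

lemma suffix_eq_drop {v w : List A} (h : v <:+ w) : v = w.drop (w.length - v.length) := by
  obtain ⟨t, rfl⟩ := h
  simp

lemma prefix_eq_take {v w : List A} (h : v <+: w) : v = w.take v.length := by
  obtain ⟨t, rfl⟩ := h
  simp

lemma infix_iff_occ (v w : List A) :
    v <:+: w ↔ ∃ k, k + v.length ≤ w.length ∧ (w.drop k).take v.length = v := by
  constructor
  · rintro ⟨s, t, rfl⟩
    refine ⟨s.length, by simp, ?_⟩
    rw [List.append_assoc, List.drop_left, List.take_left]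
  · rintro ⟨k, hk, h⟩
    have h1 : (w.drop k).take v.length <+: w.drop k := List.take_prefix _ _
    have h2 : w.drop k <:+ w := List.drop_suffix _ _
    rw [h] at h1
    exact h1.isInfix.trans h2.isInfix

lemma occ_length {v w : List A} {k : ℕ} (hv : v ≠ []) (h : (w.drop k).take v.length = v) :
    k + v.length ≤ w.length := by
  have hl := congrArg List.length h
  simp only [List.length_take, List.length_drop] at hl
  have hv' : v.length ≠ 0 := fun h0 => hv (List.length_eq_zero_iff.mp h0)
  omega


lemma factorAt_iff {u : List A} {ξ : ℕ → A} {k : ℕ} :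
    FactorAt u ξ k ↔ ∀ i (h : i < u.length), u[i] = ξ (k + i) := by
  unfold FactorAt
  constructor
  · intro h i hi
    calc u[i] = ((List.range u.length).map fun j => ξ (k + j))[i]'(by simpa using hi) :=
          List.getElem_of_eq h hi
      _ = ξ (k + i) := by simp
  · intro h
    apply List.ext_getElem (by simp)
    intro n h1 h2
    simp [h n h1]

lemma isFactorOf_infix {u v : List A} {ξ : ℕ → A} (h : v <:+: u) (hu : IsFactorOf u ξ) :
    IsFactorOf v ξ := by
  obtain ⟨k, hk⟩ := hu
  obtain ⟨s, t, rfl⟩ := h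
  refine ⟨k + s.length, factorAt_iff.2 ?_⟩
  intro i hi
  have h1 := factorAt_iff.1 hk (s.length + i) (by simp; omega)
  have h2 : ((s ++ v) ++ t)[s.length + i]'(by simp; omega) = v[i] := by
    rw [List.getElem_append_left (by simp; omega)]
    rw [List.getElem_append_right (by omega)]
    congr 1
    omega
  rw [← h2, h1]
  congr 1
  omega

lemma mem_occList {u w : List A} {k : ℕ} :
    k ∈ (List.range (w.length + 1)).filter (fun k => (w.drop k).take u.length == u) ↔
      k ≤ w.length ∧ (w.drop k).take u.length = u := by
  simp [List.mem_filter, Nat.lt_succ_iff]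

lemma occCount_eq_two {u w : List A} {m : ℕ} (hm : m ≠ 0) (hmw : m ≤ w.length)
    (h : ∀ k, k ≤ w.length → ((w.drop k).take u.length = u ↔ k = 0 ∨ k = m)) :
    occCount u w = 2 := by
  unfold occCount
  have nd : (((List.range (w.length + 1)).filter
      (fun k => (w.drop k).take u.length == u))).Nodup :=
    List.nodup_range.filter _
  rw [← List.toFinset_card_of_nodup nd]
  have : ((List.range (w.length + 1)).filter
      (fun k => (w.drop k).take u.length == u)).toFinset = {0, m} := by
    ext j
    simp only [List.mem_toFinset, mem_occList, Finset.mem_insert, Finset.mem_singleton]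
    constructor
    · rintro ⟨hj, hocc⟩
      exact (h j hj).1 hocc
    · rintro (rfl | hj)
      · exact ⟨Nat.zero_le _, (h 0 (Nat.zero_le _)).2 (Or.inl rfl)⟩
      · subst hj
        exact ⟨hmw, (h j hmw).2 (Or.inr rfl)⟩
  rw [this, Finset.card_insert_of_notMem (by simp [Ne.symm hm]), Finset.card_singleton]

lemma three_le_occCount {u w : List A} {a b c : ℕ} (hab : a ≠ b) (hac : a ≠ c) (hbc : b ≠ c)
    (ha : a ≤ w.length) (hb : b ≤ w.length) (hc : c ≤ w.length)
    (hoa : (w.drop a).take u.length = u) (hob : (w.drop b).take u.length = u)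
    (hoc : (w.drop c).take u.length = u) : 3 ≤ occCount u w := by
  unfold occCount
  have nd : (((List.range (w.length + 1)).filter
      (fun k => (w.drop k).take u.length == u))).Nodup :=
    List.nodup_range.filter _
  rw [← List.toFinset_card_of_nodup nd]
  have hsub : ({a, b, c} : Finset ℕ) ⊆ ((List.range (w.length + 1)).filter
      (fun k => (w.drop k).take u.length == u)).toFinset := by
    intro j hj
    simp only [Finset.mem_insert, Finset.mem_singleton] at hj
    rw [List.mem_toFinset, mem_occList]
    rcases hj with rfl | rfl | rfl
    exacts [⟨ha, hoa⟩, ⟨hb, hob⟩, ⟨hc, hoc⟩]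
  calc 3 = ({a, b, c} : Finset ℕ).card := by
        rw [Finset.card_insert_of_notMem (by simp [hab, hac]), Finset.card_pair hbc]
    _ ≤ _ := Finset.card_le_card hsub


lemma suffix_suffix {q p w : List A} (hq : q <:+ w) (hp : p <:+ w) (h : q.length ≤ p.length) :
    q <:+ p := by
  have := List.prefix_of_prefix_length_le ((List.reverse_prefix).2 hq)
    ((List.reverse_prefix).2 hp) (by simpa using h)
  exact (List.reverse_prefix).1 this

lemma suffix_pal_take {p q : List A} (hp : p.reverse = p) (hq : q.reverse = q) (h : q <:+ p) :
    q = p.take q.length := by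
  obtain ⟨t, rfl⟩ := h
  have key : t ++ q = q ++ t.reverse := by
    conv_lhs => rw [← hp]
    simp [List.reverse_append, hq]
  rw [key]
  exact List.take_left.symm

def palSet (w : List A) : Set (List A) := {v | v <:+: w ∧ v.reverse = v}

lemma palSet_finite (w : List A) : (palSet w).Finite := by
  apply Set.Finite.subset w.sublists.toFinset.finite_toSet
  intro v hv
  rw [Finset.mem_coe, List.mem_toFinset, List.mem_sublists]
  exact hv.1.sublist

lemma rich_ncard {ξ : ℕ → A} (hrich : IsRich ξ) {w : List A} (hw : IsFactorOf w ξ) :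
    (palSet w).ncard = w.length + 1 := by
  rw [← Nat.card_coe_set_eq]
  exact hrich w hw

lemma occ_dropLast {q w : List A} {k : ℕ} (hq : (w.drop k).take q.length = q)
    (hlen : k + q.length + 1 ≤ w.length) : q <:+: w.dropLast := by
  rw [infix_iff_occ]
  refine ⟨k, by rw [List.length_dropLast]; omega, ?_⟩
  rw [List.dropLast_eq_take, List.drop_take, List.take_take,
    inf_of_le_left (by omega : q.length ≤ w.length - 1 - k)]
  exact hq

lemma lps_exists {ξ : ℕ → A} (hrich : IsRich ξ) {w : List A} (hw : IsFactorOf w ξ)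
    (hne : w ≠ []) :
    ∃ p : List A, p <:+ w ∧ p.reverse = p ∧ 1 ≤ p.length ∧
      (∀ q : List A, q <:+ w → q.reverse = q → q.length ≤ p.length) ∧
      (∀ k, k ≤ w.length → (w.drop k).take p.length = p → k = w.length - p.length) := by
  have hw1 : 1 ≤ w.length := List.length_pos_iff.2 hne
  have hP1 : (w.drop (w.length - 1)).reverse = w.drop (w.length - 1) :=
    pal_of_len_le_one _ (by rw [List.length_drop]; omega)
  set m := Nat.findGreatest
    (fun n => (w.drop (w.length - n)).reverse = w.drop (w.length - n)) w.length with hmdef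
  have hm1 : 1 ≤ m := Nat.le_findGreatest hw1 hP1
  have hmw : m ≤ w.length := Nat.findGreatest_le _
  have hPm : (w.drop (w.length - m)).reverse = w.drop (w.length - m) := by
    have h := Nat.findGreatest_spec
      (P := fun n => (w.drop (w.length - n)).reverse = w.drop (w.length - n)) hw1 hP1
    rw [← hmdef] at h
    simpa using h
  have hplen : (w.drop (w.length - m)).length = m := by rw [List.length_drop]; omega
  have hmax : ∀ q : List A, q <:+ w → q.reverse = q →
      q.length ≤ (w.drop (w.length - m)).length := by
    intro q hq hqpal
    rw [hplen]
    by_contra hlt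
    push_neg at hlt
    have hPq : (w.drop (w.length - q.length)).reverse = w.drop (w.length - q.length) := by
      rw [← suffix_eq_drop hq]
      exact hqpal
    exact Nat.findGreatest_is_greatest
      (P := fun n => (w.drop (w.length - n)).reverse = w.drop (w.length - n))
      (by rw [← hmdef]; omega) hq.length_le hPq
  refine ⟨w.drop (w.length - m), List.drop_suffix _ _, hPm, by omega, hmax, ?_⟩
  intro k hk hocc
  by_contra hne'
  have hp_ne : w.drop (w.length - m) ≠ [] := by
    intro h0
    rw [h0] at hplen
    simp at hplen
    omega
  have hkm : k + m ≤ w.length := by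
    have := occ_length hp_ne hocc
    omega
  have hne'' : k ≠ w.length - m := by
    intro h
    apply hne'
    rw [hplen, h]
  have hklt : k + m + 1 ≤ w.length := by omega
  have hinf : (w.drop (w.length - m)) <:+: w.dropLast := occ_dropLast hocc (by omega)
  have hdfac : IsFactorOf w.dropLast ξ :=
    isFactorOf_infix (by rw [List.dropLast_eq_take]; exact (List.take_prefix _ _).isInfix) hw
  have h1 := rich_ncard hrich hw
  have h2 := rich_ncard hrich hdfac
  rw [List.length_dropLast] at h2
  have hsub : palSet w ⊆ palSet w.dropLast := by
    rintro q ⟨hqinf, hqpal⟩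
    obtain ⟨j, hj, hjocc⟩ := (infix_iff_occ _ _).1 hqinf
    by_cases hjc : j + q.length = w.length
    · have hqeq : q = w.drop j := by
        rw [← hjocc]
        exact List.take_of_length_le (by rw [List.length_drop]; omega)
      have hqsuf : q <:+ w := hqeq ▸ List.drop_suffix j w
      have hqle : q.length ≤ m := by
        have := hmax q hqsuf hqpal
        omega
      rcases eq_or_lt_of_le hqle with heq | hlt
      · have hqp : q = w.drop (w.length - m) := by
          rw [suffix_eq_drop hqsuf, heq]
        rw [hqp]
        exact ⟨hinf, hPm⟩
      · have hq_suf_p : q <:+ w.drop (w.length - m) :=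
          suffix_suffix hqsuf (List.drop_suffix _ _) (by omega)
        have hq_take := suffix_pal_take hPm hqpal hq_suf_p
        exact ⟨occ_dropLast hq_take.symm (by omega), hqpal⟩
    · exact ⟨occ_dropLast hjocc (by omega), hqpal⟩
  have hle := Set.ncard_le_ncard hsub (palSet_finite _)
  omega

lemma return_pal {ξ : ℕ → A} (hrich : IsRich ξ) {v w : List A} (hv : v ≠ [])
    (hvpal : v.reverse = v) (hw : IsFactorOf w ξ) (hpre : v <+: w) (hsuf : v <:+ w)
    (hocc : occCount v w = 2) : w.reverse = w := by
  have hwne : w ≠ [] := by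
    intro h
    rw [h] at hpre
    exact hv (List.prefix_nil.mp hpre)
  obtain ⟨p, hpsuf, hppal, hp1, hpmax, hpuniq⟩ := lps_exists hrich hw hwne
  have hvle : v.length ≤ p.length := hpmax v hsuf hvpal
  have hv1 : 1 ≤ v.length := List.length_pos_iff.2 hv
  by_cases hfull : p.length = w.length
  · have : p = w := hpsuf.eq_of_length hfull
    rwa [← this]
  · have hplt : p.length < w.length := lt_of_le_of_ne hpsuf.length_le hfull
    exfalso
    rcases eq_or_lt_of_le hvle with heq | hlt
    · have hvp : v = p := by
        rw [suffix_eq_drop hsuf, suffix_eq_drop hpsuf, heq]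
      have h0 : (w.drop 0).take p.length = p := by
        rw [List.drop_zero, ← hvp]
        exact (prefix_eq_take hpre).symm
      have := hpuniq 0 (Nat.zero_le _) h0
      omega
    · have hvsufp : v <:+ p := suffix_suffix hsuf hpsuf hvle
      have hvtake := suffix_pal_take hppal hvpal hvsufp
      have ha : (w.drop 0).take v.length = v := by
        rw [List.drop_zero]
        exact (prefix_eq_take hpre).symm
      have hb : (w.drop (w.length - p.length)).take v.length = v := by
        rw [← suffix_eq_drop hpsuf]
        exact hvtake.symm
      have hc : (w.drop (w.length - v.length)).take v.length = v := by
        rw [← suffix_eq_drop hsuf]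
        simp
      have h3 := three_le_occCount (by omega : (0:ℕ) ≠ w.length - p.length)
        (by omega : (0:ℕ) ≠ w.length - v.length) (by omega) (Nat.zero_le _)
        (by omega) (by omega) ha hb hc
      omega


lemma priv_pal {ξ : ℕ → A} (hrich : IsRich ξ) :
    ∀ n (u : List A), PrivOrder n u → IsFactorOf u ξ → u.reverse = u := by
  intro n
  induction n with
  | zero =>
    intro u h _
    cases h
    rfl
  | succ n ih =>
    intro u h hu
    obtain ⟨v, hv, hcfr⟩ : ∃ v, PrivOrder n v ∧ IsCFR v u := by
      cases h with
      | succ hv hcfr => exact ⟨_, hv, hcfr⟩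
    by_cases hv0 : v = []
    · subst hv0
      unfold IsCFR at hcfr
      rw [if_pos rfl] at hcfr
      exact pal_of_len_le_one u (by omega)
    · unfold IsCFR at hcfr
      rw [if_neg hv0] at hcfr
      obtain ⟨hp, hs, hocc⟩ := hcfr
      exact return_pal hrich hv0 (ih v hv (isFactorOf_infix hp.isInfix hu)) hu hp hs hocc

lemma pal_priv {ξ : ℕ → A} (hrich : IsRich ξ) :
    ∀ N (u : List A), u.length ≤ N → IsFactorOf u ξ → u.reverse = u → IsPrivileged u := by
  intro N
  induction N with
  | zero =>
    intro u hlen _ _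
    have hu0 : u = [] := List.length_eq_zero_iff.mp (by omega)
    exact ⟨0, hu0 ▸ PrivOrder.zero⟩
  | succ N ih =>
    intro u hlen hu hupal
    rcases Nat.lt_or_ge u.length 2 with h2 | h2
    · rcases Nat.lt_or_ge u.length 1 with h1 | h1
      · have hu0 : u = [] := List.length_eq_zero_iff.mp (by omega)
        exact ⟨0, hu0 ▸ PrivOrder.zero⟩
      · refine ⟨1, PrivOrder.succ PrivOrder.zero ?_⟩
        unfold IsCFR
        rw [if_pos rfl]
        omega
    · have hQ1 : (u.take 1).reverse = u.take 1 ∧ 1 ≤ 1 :=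
        ⟨pal_of_len_le_one _ (by rw [List.length_take]; omega), le_rfl⟩
      set m := Nat.findGreatest (fun n => (u.take n).reverse = u.take n ∧ 1 ≤ n)
        (u.length - 1) with hmdef
      have hm1 : 1 ≤ m := by
        rw [hmdef]
        exact Nat.le_findGreatest (by omega) hQ1
      have hmle : m ≤ u.length - 1 := by
        rw [hmdef]
        exact Nat.findGreatest_le _
      have hvpal : (u.take m).reverse = u.take m := by
        have h := Nat.findGreatest_spec
          (P := fun n => (u.take n).reverse = u.take n ∧ 1 ≤ n)
          (by omega : 1 ≤ u.length - 1) hQ1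
        rw [← hmdef] at h
        exact h.1
      have hvlen : (u.take m).length = m := by rw [List.length_take]; omega
      have hvne : u.take m ≠ [] := by
        intro h0
        rw [h0] at hvlen
        simp at hvlen
        omega
      have hvpre : u.take m <+: u := List.take_prefix _ _
      have hvdropeq : u.take m = u.drop (u.length - m) := by
        have h := List.reverse_take (l := u) (i := m)
        rw [hupal, hvpal] at h
        exact h
      have hvsuf : u.take m <:+ u := by
        rw [hvdropeq]
        exact List.drop_suffix _ _
      have hocc2 : occCount (u.take m) u = 2 := by
        apply occCount_eq_two (m := u.length - m) (by omega) (by omega)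
        intro k hk
        constructor
        · intro hkocc0
          by_contra hcon
          push_neg at hcon
          obtain ⟨hkne0, hkneM⟩ := hcon
          have hkocc' := hkocc0
          rw [hvlen] at hkocc'
          have hkm : k + m ≤ u.length := by
            have := occ_length hvne hkocc0
            omega
          have hklt : k < u.length - m := by omega
          have hex : ∃ j, 0 < j ∧ j + m ≤ u.length ∧ (u.drop j).take m = u.take m :=
            ⟨k, by omega, by omega, hkocc'⟩
          set k0 := Nat.find hex with hk0def
          have hk0spec := Nat.find_spec hex
          rw [← hk0def] at hk0spec
          obtain ⟨hk0pos, hk0len, hk0occ⟩ := hk0spec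
          have hk0k : k0 ≤ k := by
            rw [hk0def]
            exact Nat.find_min' hex ⟨by omega, by omega, hkocc'⟩
          have hrlen : (u.take (k0 + m)).length = k0 + m := by
            rw [List.length_take]; omega
          have hrpre_v : u.take m <+: u.take (k0 + m) := by
            have h : (u.take (k0 + m)).take m = u.take m := by
              rw [List.take_take, inf_of_le_left (by omega : m ≤ k0 + m)]
            exact h ▸ List.take_prefix _ _
          have hdt : (u.take (k0 + m)).drop k0 = u.take m := by
            rw [List.drop_take, show k0 + m - k0 = m by omega]
            exact hk0occ
          have hrsuf_v : u.take m <:+ u.take (k0 + m) := hdt ▸ List.drop_suffix _ _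
          have hroc : occCount (u.take m) (u.take (k0 + m)) = 2 := by
            apply occCount_eq_two (m := k0) (by omega) (by omega)
            intro j hj
            rw [hvlen]
            constructor
            · intro hjocc
              have hjm : j + m ≤ k0 + m := by
                have := occ_length hvne (by rw [hvlen]; exact hjocc)
                omega
              have hjocc' : (u.drop j).take m = u.take m := by
                rw [← hjocc, List.drop_take, List.take_take,
                  inf_of_le_left (by omega : m ≤ k0 + m - j)]
              rcases Nat.eq_zero_or_pos j with rfl | hjpos
              · exact Or.inl rfl
              · right
                have hk0j : k0 ≤ j := by
                  rw [hk0def]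
                  exact Nat.find_min' hex ⟨hjpos, by omega, hjocc'⟩
                omega
            · rintro (rfl | rfl)
              · rw [List.drop_zero, List.take_take, inf_of_le_left (by omega : m ≤ k0 + m)]
              · rw [hdt]
                simp [List.take_take]
          have hrfac : IsFactorOf (u.take (k0 + m)) ξ :=
            isFactorOf_infix (List.take_prefix _ _).isInfix hu
          have hrpal := return_pal hrich hvne hvpal hrfac hrpre_v hrsuf_v hroc
          have hrle : k0 + m ≤ u.length - 1 := by omega
          exact Nat.findGreatest_is_greatest
            (P := fun n => (u.take n).reverse = u.take n ∧ 1 ≤ n)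
            (by rw [← hmdef]; omega) hrle ⟨hrpal, by omega⟩
        · rintro (rfl | rfl)
          · rw [List.drop_zero, hvlen]
          · rw [hvlen, ← hvdropeq]
            simp [List.take_take]
      have hvfac : IsFactorOf (u.take m) ξ :=
        isFactorOf_infix (List.take_prefix _ _).isInfix hu
      obtain ⟨n, hn⟩ := ih (u.take m) (by omega) hvfac hvpal
      refine ⟨n + 1, PrivOrder.succ hn ?_⟩
      unfold IsCFR
      rw [if_neg hvne]
      exact ⟨hvpre, hvsuf, hocc2⟩


end Statement2Aux

/-- For a factor of a rich infinite word over a finite alphabet,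
being a palindrome is equivalent to being privileged. -/
theorem statement2 {A : Type*} [Fintype A] [DecidableEq A] (ξ : ℕ → A) (hrich : IsRich ξ)
    (u : List A) (hu : IsFactorOf u ξ) : u.reverse = u ↔ IsPrivileged u := by
  constructor
  · intro hpal
    exact pal_priv hrich u.length u le_rfl hu hpal
  · rintro ⟨n, hn⟩
    exact priv_pal hrich n u hn hu

end Arx1111
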